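/- Fix m, n, a finite index type T, injective maps I₀ : Fin 3 → Fin m and J₀ : Fin 3 → Fin n, and a real 3 × 3 matrix B with det(B) ≠ 0. For each t ∈ T let Uₜ be a real m × 3 matrix and Vₜ a real 3 × n matrix with Uₜ.submatrix I₀ id = I₃ and Vₜ.submatrix id J₀ = B, and let Rₜ ⊆ Fin m and Cₜ ⊆ Fin n be sets with range(I₀) ⊆ Rₜ and range(J₀) ⊆ Cₜ such that for all t ≠ t' the sets Rₜ \ range(I₀) and Rₜ' \ range(I₀) are disjoint and the sets Cₜ \ range(J₀) and Cₜ' \ range(J₀) are disjoint. Then there exist a real m × 3 matrix U and a real 3 × n matrix V such that rank(U * V) ≤ 3 and for every t ∈ T, every i ∈ Rₜ, and every j ∈ Cₜ, (U * V)_{ij} = (Uₜ * Vₜ)_{ij}. -/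

import Mathlib

theorem global_embedding_of_gadget_witnesses
    (m n : ℕ) (T : Type) [Fintype T]
    (I₀ : Fin 3 → Fin m) (J₀ : Fin 3 → Fin n)
    (hI₀ : Function.Injective I₀) (hJ₀ : Function.Injective J₀)
    (B : Matrix (Fin 3) (Fin 3) ℝ) (hB : B.det ≠ 0)
    (U : T → Matrix (Fin m) (Fin 3) ℝ) (V : T → Matrix (Fin 3) (Fin n) ℝ)
    (hU : ∀ t, (U t).submatrix I₀ id = (1 : Matrix (Fin 3) (Fin 3) ℝ))
    (hV : ∀ t, (V t).submatrix id J₀ = B)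
    (R : T → Set (Fin m)) (C : T → Set (Fin n))
    (hR : ∀ t, Set.range I₀ ⊆ R t) (hC : ∀ t, Set.range J₀ ⊆ C t)
    (hRdisj : ∀ t t', t ≠ t' →
      Disjoint (R t \ Set.range I₀) (R t' \ Set.range I₀))
    (hCdisj : ∀ t t', t ≠ t' →
      Disjoint (C t \ Set.range J₀) (C t' \ Set.range J₀)) :
    ∃ (U' : Matrix (Fin m) (Fin 3) ℝ) (V' : Matrix (Fin 3) (Fin n) ℝ),
      (U' * V').rank ≤ 3 ∧
      ∀ t, ∀ i ∈ R t, ∀ j ∈ C t, (U' * V') i j = (U t * V t) i j := by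
  classical
  refine ⟨fun i k => if h : ∃ t, i ∈ R t then U h.choose i k else 0,
          fun k j => if h : ∃ t, j ∈ C t then V h.choose k j else 0, ?_, ?_⟩
  · refine le_trans (Matrix.rank_mul_le_left _ _) ?_
    exact le_of_le_of_eq (Matrix.rank_le_card_width _) (Fintype.card_fin 3)
  · intro t i hi j hj
    have hrow : ∀ k, (if h : ∃ t, i ∈ R t then U h.choose i k else 0) = U t i k := by
      intro k
      have h : ∃ t, i ∈ R t := ⟨t, hi⟩
      rw [dif_pos h]
      by_cases hr : i ∈ Set.range I₀
      · obtain ⟨a, rfl⟩ := hr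
        have h1 := congrFun (congrFun (hU h.choose) a) k
        have h2 := congrFun (congrFun (hU t) a) k
        simp only [Matrix.submatrix_apply, id] at h1 h2
        rw [h1, h2]
      · by_cases he : h.choose = t
        · rw [he]
        · exact absurd rfl ((hRdisj h.choose t he).ne_of_mem
            ⟨h.choose_spec, hr⟩ ⟨hi, hr⟩)
    have hcol : ∀ k, (if h : ∃ t, j ∈ C t then V h.choose k j else 0) = V t k j := by
      intro k
      have h : ∃ t, j ∈ C t := ⟨t, hj⟩
      rw [dif_pos h]
      by_cases hc : j ∈ Set.range J₀
      · obtain ⟨a, rfl⟩ := hc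
        have h1 := congrFun (congrFun (hV h.choose) k) a
        have h2 := congrFun (congrFun (hV t) k) a
        simp only [Matrix.submatrix_apply, id] at h1 h2
        rw [h1, h2]
      · by_cases he : h.choose = t
        · rw [he]
        · exact absurd rfl ((hCdisj h.choose t he).ne_of_mem
            ⟨h.choose_spec, hc⟩ ⟨hj, hc⟩)
    simp only [Matrix.mul_apply]
    exact Matrix.mul_apply.trans (Finset.sum_congr rfl fun k _ => by simp only [hrow k, hcol k])
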